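/- Equip the polynomial ring B = k[t,t⁻¹][y] with the Poisson bracket {F,G} := (∂F/∂y)(∂G/∂t) − (∂F/∂t)(∂G/∂y). For γ ∈ k define p_γ: k[t,t⁻¹] → B by p_γ(f) = f·y + γ·f'. Then {p_γ(f), p_γ(g)} = p_γ(f·g' − f'·g) for all f, g ∈ k[t,t⁻¹]; that is, p_γ is a Lie algebra homomorphism from the Witt algebra into (B, {·,·}). -/

import Mathlib

/-- Formal derivative on Laurent polynomials, sending `tⁿ` to `n·tⁿ⁻¹`. -/
noncomputable def lderiv {k : Type*} [CommRing k] (f : LaurentPolynomial k) : LaurentPolynomial k :=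
  AddMonoidAlgebra.ofCoeff (Finsupp.sum f.coeff fun n a => Finsupp.single (n - 1) ((n : k) * a))

section Aux

variable {k : Type*} [CommRing k]

lemma lderiv_zero : lderiv (0 : LaurentPolynomial k) = 0 := by
  unfold lderiv
  simp

lemma lderiv_single (n : ℤ) (a : k) :
    lderiv (AddMonoidAlgebra.single n a : LaurentPolynomial k)
      = AddMonoidAlgebra.single (n - 1) ((n : k) * a) := by
  unfold lderiv
  rw [AddMonoidAlgebra.coeff_single, Finsupp.sum_single_index, AddMonoidAlgebra.ofCoeff_single]
  simp

lemma lderiv_add (f g : LaurentPolynomial k) : lderiv (f + g) = lderiv f + lderiv g := by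
  unfold lderiv
  rw [AddMonoidAlgebra.coeff_add, Finsupp.sum_add_index] <;> intros <;>
    simp [mul_add, AddMonoidAlgebra.ofCoeff_add]

lemma lderiv_single_mul (m n : ℤ) (a b : k) :
    lderiv ((AddMonoidAlgebra.single m a : LaurentPolynomial k) * AddMonoidAlgebra.single n b)
      = lderiv (AddMonoidAlgebra.single m a : LaurentPolynomial k) * AddMonoidAlgebra.single n b
        + (AddMonoidAlgebra.single m a : LaurentPolynomial k)
          * lderiv (AddMonoidAlgebra.single n b : LaurentPolynomial k) := by
  rw [AddMonoidAlgebra.single_mul_single, lderiv_single, lderiv_single, lderiv_single,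
    AddMonoidAlgebra.single_mul_single, AddMonoidAlgebra.single_mul_single]
  have h1 : m - 1 + n = m + n - 1 := by ring
  have h2 : m + (n - 1) = m + n - 1 := by ring
  rw [h1, h2, ← AddMonoidAlgebra.single_add]
  congr 1
  push_cast
  ring

lemma lderiv_single_mul' (m : ℤ) (a : k) (g : LaurentPolynomial k) :
    lderiv ((AddMonoidAlgebra.single m a : LaurentPolynomial k) * g)
      = lderiv (AddMonoidAlgebra.single m a : LaurentPolynomial k) * g
        + (AddMonoidAlgebra.single m a : LaurentPolynomial k) * lderiv g := by
  induction g using AddMonoidAlgebra.induction with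
  | zero => simp [lderiv_zero]
  | single_add n b g hn hb ih =>
    rw [mul_add, lderiv_add]
    rw [ih, lderiv_add, mul_add, mul_add, lderiv_single_mul]
    ring

lemma lderiv_mul (f g : LaurentPolynomial k) :
    lderiv (f * g) = lderiv f * g + f * lderiv g := by
  induction f using AddMonoidAlgebra.induction with
  | zero => simp [lderiv_zero]
  | single_add m a f hm ha ih =>
    rw [add_mul, lderiv_add]
    rw [ih, lderiv_add, add_mul, add_mul, lderiv_single_mul']
    ring

lemma lderiv_sub (f g : LaurentPolynomial k) : lderiv (f - g) = lderiv f - lderiv g := by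
  have h := lderiv_add (f - g) g
  rw [sub_add_cancel] at h
  exact eq_sub_of_add_eq h.symm

lemma lderiv_C (γ : k) : lderiv (LaurentPolynomial.C γ) = 0 := by
  have : (LaurentPolynomial.C γ : LaurentPolynomial k) = AddMonoidAlgebra.single 0 γ := rfl
  rw [this, lderiv_single]
  simp

lemma lderiv_C_mul (γ : k) (f : LaurentPolynomial k) :
    lderiv (LaurentPolynomial.C γ * f) = LaurentPolynomial.C γ * lderiv f := by
  rw [lderiv_mul, lderiv_C]
  simp

end Aux

/-- Partial derivative `∂/∂t` on `B = k[t,t⁻¹][y]`, acting on coefficients. -/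
noncomputable def pderivT {k : Type*} [CommRing k] (F : Polynomial (LaurentPolynomial k)) :
    Polynomial (LaurentPolynomial k) :=
  F.sum fun i a => Polynomial.C (lderiv a) * Polynomial.X ^ i

/-- The Poisson bracket `{F,G} = (∂F/∂y)(∂G/∂t) − (∂F/∂t)(∂G/∂y)` on `B = k[t,t⁻¹][y]`. -/
noncomputable def poissonB {k : Type*} [CommRing k]
    (F G : Polynomial (LaurentPolynomial k)) : Polynomial (LaurentPolynomial k) :=
  Polynomial.derivative F * pderivT G - pderivT F * Polynomial.derivative G

/-- The map `p_γ : f ↦ f·y + γ·f'` from `k[t,t⁻¹]` to `B = k[t,t⁻¹][y]`. -/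
noncomputable def pGamma {k : Type*} [CommRing k] (γ : k) (f : LaurentPolynomial k) :
    Polynomial (LaurentPolynomial k) :=
  Polynomial.C f * Polynomial.X + Polynomial.C (LaurentPolynomial.C γ * lderiv f)

section Aux2

variable {k : Type*} [CommRing k]

lemma pderivT_monomial (n : ℕ) (a : LaurentPolynomial k) :
    pderivT (Polynomial.monomial n a) = Polynomial.C (lderiv a) * Polynomial.X ^ n := by
  unfold pderivT
  rw [Polynomial.sum_monomial_index]
  simp [lderiv_zero]

lemma pderivT_add (F G : Polynomial (LaurentPolynomial k)) :
    pderivT (F + G) = pderivT F + pderivT G := by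
  unfold pderivT
  rw [Polynomial.sum_add_index] <;> intros <;> simp [lderiv_zero, lderiv_add, add_mul]

lemma pderivT_pGamma (γ : k) (f : LaurentPolynomial k) :
    pderivT (pGamma γ f) = Polynomial.C (lderiv f) * Polynomial.X
      + Polynomial.C (LaurentPolynomial.C γ * lderiv (lderiv f)) := by
  unfold pGamma
  rw [Polynomial.C_mul_X_eq_monomial, ← Polynomial.monomial_zero_left, pderivT_add,
    pderivT_monomial, pderivT_monomial, lderiv_C_mul]
  simp [Polynomial.C_mul_X_eq_monomial]

end Aux2

/-- With the Poisson bracket `{F,G} = (∂F/∂y)(∂G/∂t) − (∂F/∂t)(∂G/∂y)` on `B = k[t,t⁻¹][y]`,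
the map `p_γ(f) = f·y + γ·f'` satisfies `{p_γ(f), p_γ(g)} = p_γ(fg' − f'g)`; that is, `p_γ` is
a Lie algebra homomorphism from the Witt algebra into `(B, {·,·})`. -/
theorem pGamma_poisson_hom {k : Type*} [Field k] [CharZero k] (γ : k)
    (f g : LaurentPolynomial k) :
    poissonB (pGamma γ f) (pGamma γ g) = pGamma γ (f * lderiv g - lderiv f * g) := by
  unfold poissonB
  rw [pderivT_pGamma, pderivT_pGamma]
  unfold pGamma
  simp only [Polynomial.derivative_add, Polynomial.derivative_C, Polynomial.derivative_mul,
    Polynomial.derivative_X, mul_one, add_zero, mul_zero, zero_add]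
  rw [lderiv_sub, lderiv_mul, lderiv_mul]
  simp only [map_sub, map_mul, map_add]
  ring
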